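/- Let φ₁,…,φ_k ∈ D(B) satisfy (Bφ_i|φ_j) = β_iδ_ij with β_i < 0 for all i. Set β_i⁻ := (|B|P₋φ_i|P₋φ_i) and β̂_max := max_i β_i⁻/|β_i| (so β̂_max ≥ 1, since β_i = (BP₊φ_i|P₊φ_i) − β_i⁻ < 0). Then for every ε with 0 < ε ≤ 1/(2√(β̂_max − 1/2)), every h ∈ D(B), and every q = Σ_{i=1}^{k} b_iφ_i with b_i ∈ ℝ, one has (1/2)(Bq|q) + 2(Bh|q) ≤ (k/ε²)(|B|h|h). -/

import Mathlib

open MeasureTheory Set Filter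
open scoped RealInnerProductSpace ENNReal

noncomputable section

/-- The key estimate (4.8)/(4.9) of Lemma 4.1: if `(Bφ_i|φ_j) = β_i δ_ij` with
`β_i < 0`, and `β̂_max = max_i β_i⁻/|β_i|` with `β_i⁻ = (|B|P₋φ_i|P₋φ_i)`, then for
`0 < ε ≤ 1/(2√(β̂_max - 1/2))`, all `h ∈ D(B)` and all `q = Σ b_i φ_i`,
`(1/2)(Bq|q) + 2(Bh|q) ≤ (k/ε²)(|B|h|h)`. -/
theorem statement14
    {H : Type*} [NormedAddCommGroup H] [InnerProductSpace ℝ H] [CompleteSpace H]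
    (B : H →ₗ[ℝ] H) (DB : Submodule ℝ H)
    -- `B` self-adjoint and non-singular
    (hBsym : ∀ x ∈ DB, ∀ y ∈ DB, ⟪B x, y⟫ = ⟪x, B y⟫)
    (hBinj : ∀ x ∈ DB, B x = 0 → x = 0)
    -- `P₊, P₋`: spectral projections of `B` for `[0,∞)` resp. `(-∞,0)`
    (Pp Pm : H →L[ℝ] H)
    (hPsum : ∀ x, Pp x + Pm x = x)
    (hPpIdem : ∀ x, Pp (Pp x) = Pp x)
    (hPmIdem : ∀ x, Pm (Pm x) = Pm x)
    (hPpSym : ∀ x y, ⟪Pp x, y⟫ = ⟪x, Pp y⟫)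
    (hPmSym : ∀ x y, ⟪Pm x, y⟫ = ⟪x, Pm y⟫)
    (hPpB : ∀ x ∈ DB, Pp x ∈ DB ∧ B (Pp x) = Pp (B x))
    (hPmB : ∀ x ∈ DB, Pm x ∈ DB ∧ B (Pm x) = Pm (B x))
    (hPpPos : ∀ x ∈ DB, 0 ≤ ⟪B (Pp x), Pp x⟫)
    (hPmNeg : ∀ x ∈ DB, ⟪B (Pm x), Pm x⟫ ≤ 0)
    -- the family `φ_1,…,φ_k` diagonalizing `B` with negative diagonal entries
    (k : ℕ) (hk : 0 < k) (φ : Fin k → H) (β : Fin k → ℝ)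
    (hφmem : ∀ i, φ i ∈ DB)
    (hBφφ : ∀ i j, ⟪B (φ i), φ j⟫ = if i = j then β i else 0)
    (hβneg : ∀ i, β i < 0) :
    ∀ ε : ℝ, 0 < ε →
      ε ≤ 1 / (2 * Real.sqrt
        ((Finset.univ.sup' (Finset.univ_nonempty_iff.mpr (Fin.pos_iff_nonempty.mp hk))
          fun i => (-⟪B (Pm (φ i)), Pm (φ i)⟫) / |β i|) - 1 / 2)) →
      ∀ h ∈ DB, ∀ b : Fin k → ℝ,
        (1 / 2) * ⟪B (∑ i, b i • φ i), ∑ i, b i • φ i⟫ +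
            2 * ⟪B h, ∑ i, b i • φ i⟫ ≤
          ((k : ℝ) / ε ^ 2) * (⟪B (Pp h), Pp h⟫ - ⟪B (Pm h), Pm h⟫) := by
  intro ε hε hεle h hh b
  set R : ℝ := (Finset.univ.sup' (Finset.univ_nonempty_iff.mpr (Fin.pos_iff_nonempty.mp hk))
          fun i => (-⟪B (Pm (φ i)), Pm (φ i)⟫) / |β i|) with hRdef
  -- decomposition of the quadratic form
  have hdec : ∀ x ∈ DB, ∀ y ∈ DB,
      ⟪B x, y⟫ = ⟪B (Pp x), Pp y⟫ + ⟪B (Pm x), Pm y⟫ := by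
    intro x hx y hy
    have h1 : ⟪B (Pp x), Pp y⟫ = ⟪B x, Pp y⟫ := by
      rw [(hPpB x hx).2, hPpSym, hPpIdem]
    have h2 : ⟪B (Pm x), Pm y⟫ = ⟪B x, Pm y⟫ := by
      rw [(hPmB x hx).2, hPmSym, hPmIdem]
    rw [h1, h2, ← inner_add_right, hPsum]
  -- shorthand
  have hA : (0:ℝ) ≤ ⟪B (Pp h), Pp h⟫ := hPpPos h hh
  have hM : (0:ℝ) ≤ -⟪B (Pm h), Pm h⟫ := by linarith [hPmNeg h hh]
  have hap : ∀ i, (0:ℝ) ≤ ⟪B (Pp (φ i)), Pp (φ i)⟫ := fun i => hPpPos _ (hφmem i)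
  have ham : ∀ i, (0:ℝ) ≤ -⟪B (Pm (φ i)), Pm (φ i)⟫ := fun i => by
    linarith [hPmNeg _ (hφmem i)]
  have hβdec : ∀ i, β i = ⟪B (Pp (φ i)), Pp (φ i)⟫ + ⟪B (Pm (φ i)), Pm (φ i)⟫ := by
    intro i
    have := hdec (φ i) (hφmem i) (φ i) (hφmem i)
    rw [hBφφ i i] at this; simpa using this
  -- R ≥ 1 and the ε bound
  have hamβ : ∀ i, |β i| ≤ -⟪B (Pm (φ i)), Pm (φ i)⟫ := by
    intro i
    rw [abs_of_neg (hβneg i)]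
    linarith [hβdec i, hap i]
  have hβpos : ∀ i, (0:ℝ) < |β i| := fun i => abs_pos.mpr (hβneg i).ne
  have hRge : ∀ i, (-⟪B (Pm (φ i)), Pm (φ i)⟫) / |β i| ≤ R := by
    intro i
    rw [hRdef]
    exact Finset.le_sup' (f := fun i => (-⟪B (Pm (φ i)), Pm (φ i)⟫) / |β i|)
      (Finset.mem_univ i)
  have hR1 : (1:ℝ) ≤ R := by
    obtain ⟨i⟩ := Fin.pos_iff_nonempty.mp hk
    refine le_trans ?_ (hRge i)
    rw [le_div_iff₀ (hβpos i), one_mul]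
    exact hamβ i
  have hamR : ∀ i, -⟪B (Pm (φ i)), Pm (φ i)⟫ ≤ R * |β i| := by
    intro i
    rw [← div_le_iff₀ (hβpos i)]
    exact hRge i
  have hsqrtpos : 0 < Real.sqrt (R - 1/2) := Real.sqrt_pos.mpr (by linarith)
  have hε2R : ε ^ 2 * (4 * R - 2) ≤ 1 := by
    have h1 : ε * (2 * Real.sqrt (R - 1/2)) ≤ 1 := by
      rw [← le_div_iff₀ (by positivity)]; exact hεle
    have h2 : (ε * (2 * Real.sqrt (R - 1/2))) ^ 2 ≤ 1 := by
      nlinarith [mul_pos hε (by positivity : (0:ℝ) < 2 * Real.sqrt (R - 1/2))]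
    have h3 : Real.sqrt (R - 1/2) ^ 2 = R - 1/2 := Real.sq_sqrt (by linarith)
    nlinarith [h3]
  -- generic AM-GM division step
  have gen : ∀ (A C X c : ℝ), (0 ≤ A - 2*(ε^2*c)*X + (ε^2*c)^2*C) →
      2*c*X ≤ (1/ε^2)*A + ε^2*c^2*C := by
    intro A C X c h0
    have hε2 : (0:ℝ) < ε^2 := by positivity
    have h1 : 2*c*X * ε^2 ≤ ((1/ε^2)*A + ε^2*c^2*C) * ε^2 := by
      have he : ((1/ε^2)*A + ε^2*c^2*C) * ε^2 = A + (ε^2*c)^2*C := by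
        field_simp
      rw [he]; nlinarith [h0]
    exact le_of_mul_le_mul_right h1 hε2
  -- key Cauchy–Schwarz / AM-GM bounds
  have keyP : ∀ i, 2 * b i * ⟪B (Pp h), Pp (φ i)⟫ ≤
      (1/ε^2) * ⟪B (Pp h), Pp h⟫ + ε^2 * (b i)^2 * ⟪B (Pp (φ i)), Pp (φ i)⟫ := by
    intro i
    have hx : h - (ε^2 * b i) • φ i ∈ DB :=
      DB.sub_mem hh (DB.smul_mem _ (hφmem i))
    have h0 := hPpPos _ hx
    have hPpx : Pp (h - (ε^2 * b i) • φ i)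
        = Pp h - (ε^2 * b i) • Pp (φ i) := by
      simp [map_sub, _root_.map_smul]
    rw [hPpx, map_sub, _root_.map_smul] at h0
    have hsym : ⟪B (Pp (φ i)), Pp h⟫ = ⟪B (Pp h), Pp (φ i)⟫ := by
      rw [hBsym _ (hPpB _ (hφmem i)).1 _ (hPpB _ hh).1, real_inner_comm]
    simp only [inner_sub_left, inner_sub_right, real_inner_smul_left,
      real_inner_smul_right, hsym] at h0
    exact gen _ _ _ _ (by nlinarith [h0])
  have keyM : ∀ i, 2 * b i * ⟪B (Pm h), Pm (φ i)⟫ ≤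
      (1/ε^2) * (-⟪B (Pm h), Pm h⟫) + ε^2 * (b i)^2 * (-⟪B (Pm (φ i)), Pm (φ i)⟫) := by
    intro i
    have hx : h + (ε^2 * b i) • φ i ∈ DB :=
      DB.add_mem hh (DB.smul_mem _ (hφmem i))
    have h0 := hPmNeg _ hx
    have hPmx : Pm (h + (ε^2 * b i) • φ i)
        = Pm h + (ε^2 * b i) • Pm (φ i) := by
      simp [map_add, _root_.map_smul]
    rw [hPmx, map_add, _root_.map_smul] at h0
    have hsym : ⟪B (Pm (φ i)), Pm h⟫ = ⟪B (Pm h), Pm (φ i)⟫ := by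
      rw [hBsym _ (hPmB _ (hφmem i)).1 _ (hPmB _ hh).1, real_inner_comm]
    simp only [inner_add_left, inner_add_right, real_inner_smul_left,
      real_inner_smul_right, hsym] at h0
    exact gen _ _ _ _ (by nlinarith [h0])
  -- the bracket is nonpositive
  have bracket : ∀ i, (1/2) * β i
      + ε^2 * (⟪B (Pp (φ i)), Pp (φ i)⟫ + (-⟪B (Pm (φ i)), Pm (φ i)⟫)) ≤ 0 := by
    intro i
    have h1 : ε ^ 2 * (-⟪B (Pm (φ i)), Pm (φ i)⟫) ≤ ε ^ 2 * (R * |β i|) :=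
      mul_le_mul_of_nonneg_left (hamR i) (sq_nonneg ε)
    have h2 : (ε ^ 2 * (4 * R - 2)) * |β i| ≤ 1 * |β i| :=
      mul_le_mul_of_nonneg_right hε2R (abs_nonneg _)
    have h3 : |β i| = -β i := abs_of_neg (hβneg i)
    have h4 := hβdec i
    nlinarith [hap i, ham i, sq_nonneg ε]
  -- expand the quadratic form of q
  have hq1 : ⟪B (∑ i, b i • φ i), ∑ i, b i • φ i⟫ = ∑ i, (b i)^2 * β i := by
    rw [map_sum]
    rw [sum_inner]
    refine Finset.sum_congr rfl fun i _ => ?_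
    rw [_root_.map_smul, inner_sum]
    simp only [real_inner_smul_left, real_inner_smul_right, hBφφ, mul_ite, mul_zero]
    simp [Finset.sum_ite_eq, sq]
    ring
  have hq2 : ⟪B h, ∑ i, b i • φ i⟫
      = ∑ i, b i * (⟪B (Pp h), Pp (φ i)⟫ + ⟪B (Pm h), Pm (φ i)⟫) := by
    rw [inner_sum]
    refine Finset.sum_congr rfl fun i _ => ?_
    rw [real_inner_smul_right, hdec h hh (φ i) (hφmem i)]
  rw [hq1, hq2, Finset.mul_sum, Finset.mul_sum, ← Finset.sum_add_distrib]
  have hterm : ∀ i ∈ Finset.univ, (1/2 : ℝ) * ((b i)^2 * β i)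
      + 2 * (b i * (⟪B (Pp h), Pp (φ i)⟫ + ⟪B (Pm h), Pm (φ i)⟫))
      ≤ (1/ε^2) * (⟪B (Pp h), Pp h⟫ - ⟪B (Pm h), Pm h⟫) := by
    intro i _
    have h1 := keyP i
    have h2 := keyM i
    have h3 : (b i)^2 * ((1/2) * β i
        + ε^2 * (⟪B (Pp (φ i)), Pp (φ i)⟫ + (-⟪B (Pm (φ i)), Pm (φ i)⟫))) ≤ 0 :=
      mul_nonpos_of_nonneg_of_nonpos (sq_nonneg _) (bracket i)
    nlinarith [h3]
  calc ∑ i, ((1/2 : ℝ) * ((b i)^2 * β i)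
      + 2 * (b i * (⟪B (Pp h), Pp (φ i)⟫ + ⟪B (Pm h), Pm (φ i)⟫)))
      ≤ ∑ _i : Fin k, (1/ε^2) * (⟪B (Pp h), Pp h⟫ - ⟪B (Pm h), Pm h⟫) :=
        Finset.sum_le_sum hterm
    _ = ((k : ℝ) / ε ^ 2) * (⟪B (Pp h), Pp h⟫ - ⟪B (Pm h), Pm h⟫) := by
        rw [Finset.sum_const, Finset.card_univ, Fintype.card_fin, nsmul_eq_mul]
        ring
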